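/- For every list L of integers, the list quicksort L is sorted in weakly ascending order (each element is less than or equal to the next one). -/

import Mathlib

def quicksort : List ℤ → List ℤ
  | [] => []
  | h :: t =>
      quicksort (t.filter (· ≤ h)) ++ h :: quicksort (t.filter (fun x => h < x))
termination_by l => l.length
decreasing_by
  all_goals simp only [List.length_cons]
  all_goals exact Nat.lt_succ_of_le (by rw [List.length_unattach]; exact (List.length_filter_le _ _).trans (le_of_eq (by simp)))

lemma mem_quicksort (x : ℤ) (L : List ℤ) : x ∈ quicksort L ↔ x ∈ L := by
  induction L using quicksort.induct with
  | case1 => simp [quicksort]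
  | case2 h t ih1 ih2 =>
      rw [List.unattach_filter (g := fun x => decide (x ≤ h)) (hf := fun _ _ => rfl), List.unattach_attach] at ih1
      rw [List.unattach_filter (g := fun x => decide (h < x)) (hf := fun _ _ => rfl), List.unattach_attach] at ih2
      simp only [quicksort, List.mem_append, List.mem_cons, ih1, ih2,
        List.mem_filter, decide_eq_true_eq]
      constructor
      · rintro (⟨hx, _⟩ | hx | ⟨hx, _⟩) <;> simp [hx]
      · rintro (rfl | hx)
        · tauto
        · rcases le_or_gt x h with h' | h'
          · exact Or.inl ⟨hx, h'⟩
          · exact Or.inr (Or.inr ⟨hx, h'⟩)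

lemma quicksort_pairwise (L : List ℤ) : List.Pairwise (· ≤ ·) (quicksort L) := by
  induction L using quicksort.induct with
  | case1 => simp [quicksort]
  | case2 h t ih1 ih2 =>
      rw [List.unattach_filter (g := fun x => decide (x ≤ h)) (hf := fun _ _ => rfl), List.unattach_attach] at ih1
      rw [List.unattach_filter (g := fun x => decide (h < x)) (hf := fun _ _ => rfl), List.unattach_attach] at ih2
      rw [quicksort]
      rw [List.pairwise_append]
      refine ⟨ih1, List.pairwise_cons.2 ⟨fun b hb => ?_, ih2⟩, ?_⟩
      · have := (mem_quicksort b _).1 hb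
        simp only [List.mem_filter, decide_eq_true_eq] at this
        exact le_of_lt this.2
      · intro a ha b hb
        have ha' := (mem_quicksort a _).1 ha
        simp [List.mem_filter, decide_eq_true_eq] at ha'
        rcases List.mem_cons.1 hb with rfl | hb'
        · exact ha'.2
        · have := (mem_quicksort b _).1 hb'
          simp [List.mem_filter] at this
          exact le_of_lt (lt_of_le_of_lt ha'.2 this.2)

theorem quicksort_sorted (L : List ℤ) :
    List.Chain' (· ≤ ·) (quicksort L) := by
  exact (quicksort_pairwise L).isChain
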